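/- Let k ≠ 0 be a real constant and let f be a C² real function on an open interval I ⊆ (0,∞). Then f satisfies 8(r f'(r) f''(r) − 2 f'(r)² − 4r²) = k (4r² + f'(r)²)² for all r ∈ I (equivalently, the surface of revolution t = f(√(x²+y²)) in the Heisenberg group has constant horizontal Gauss curvature k on I) if and only if there exists a constant C ∈ ℝ such that for all r ∈ I one has C − k r⁴ > 0 and (C − k r⁴)(4r² + f'(r)²) = 16 r⁴. -/

import Mathlib

/-- First integral of the constant horizontal Gauss curvature equation for
surfaces of revolution `t = f(√(x²+y²))` in the Heisenberg group, `k ≠ 0`. -/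
theorem constant_horizontal_gauss_curvature_revolution
    (k : ℝ) (hk : k ≠ 0) (a b : ℝ) (ha : 0 ≤ a) (f : ℝ → ℝ)
    (hf : ContDiffOn ℝ 2 f (Set.Ioo a b)) :
    (∀ r ∈ Set.Ioo a b,
        8 * (r * deriv f r * deriv (deriv f) r - 2 * (deriv f r) ^ 2 - 4 * r ^ 2) =
          k * (4 * r ^ 2 + (deriv f r) ^ 2) ^ 2) ↔
      ∃ C : ℝ, ∀ r ∈ Set.Ioo a b,
        C - k * r ^ 4 > 0 ∧
        (C - k * r ^ 4) * (4 * r ^ 2 + (deriv f r) ^ 2) = 16 * r ^ 4 := by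
  set s := Set.Ioo a b with hs_def
  have hs : IsOpen s := isOpen_Ioo
  have hconv : Convex ℝ s := convex_Ioo a b
  set g : ℝ → ℝ := deriv f with hg_def
  -- g is differentiable at every point of s
  have hgd : ∀ r ∈ s, HasDerivAt g (deriv g r) r := by
    intro r hr
    have h1 : ContDiffOn ℝ 1 g s := hf.deriv_of_isOpen hs (by norm_num)
    exact ((h1.differentiableOn (by norm_num)).differentiableAt
      (hs.mem_nhds hr)).hasDerivAt
  have hrpos : ∀ r ∈ s, 0 < r := fun r hr => lt_of_le_of_lt ha hr.1
  have hupos : ∀ r ∈ s, 0 < 4 * r ^ 2 + (g r) ^ 2 := by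
    intro r hr
    have h0 := hrpos r hr
    nlinarith [sq_nonneg (g r)]
  -- derivative of u x = 4x² + g x²
  have hu : ∀ r ∈ s, HasDerivAt (fun x => 4 * x ^ 2 + (g x) ^ 2)
      (8 * r + 2 * g r * deriv g r) r := by
    intro r hr
    have h1 : HasDerivAt (fun x : ℝ => 4 * x ^ 2) (4 * (2 * r)) r := by
      simpa using ((hasDerivAt_pow 2 r).const_mul (4 : ℝ))
    have h2 : HasDerivAt (fun x => (g x) ^ 2) (2 * g r ^ 1 * deriv g r) r := by
      simpa using (hgd r hr).fun_pow 2
    exact (h1.fun_add h2).congr_deriv (by ring)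
  constructor
  · -- forward direction
    intro hODE
    rcases Set.eq_empty_or_nonempty s with he | ⟨r₀, hr₀⟩
    · exact ⟨0, fun r hr => absurd hr (he ▸ Set.notMem_empty r)⟩
    set φ : ℝ → ℝ := fun x => 16 * x ^ 4 / (4 * x ^ 2 + (g x) ^ 2) + k * x ^ 4 with hφ_def
    have hφ : ∀ r ∈ s, HasDerivAt φ 0 r := by
      intro r hr
      have hnum : HasDerivAt (fun x : ℝ => 16 * x ^ 4) (16 * (4 * r ^ 3)) r := by
        simpa using ((hasDerivAt_pow 4 r).const_mul (16 : ℝ))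
      have hden := hu r hr
      have hune : 4 * r ^ 2 + (g r) ^ 2 ≠ 0 := ne_of_gt (hupos r hr)
      have hk4 : HasDerivAt (fun x : ℝ => k * x ^ 4) (k * (4 * r ^ 3)) r := by
        simpa using ((hasDerivAt_pow 4 r).const_mul k)
      have hdiv := (hnum.fun_div hden hune).fun_add hk4
      refine hdiv.congr_deriv (Eq.symm ?_)
      have h := hODE r hr
      have h0 := hrpos r hr
      field_simp
      linear_combination (4 * r ^ 3) * h
    -- φ is constant on s
    have hdiffOn : DifferentiableOn ℝ φ s := fun x hx =>
      ((hφ x hx).differentiableAt).differentiableWithinAt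
    have hfd : ∀ x ∈ s, fderivWithin ℝ φ s x = 0 := by
      intro x hx
      rw [fderivWithin_of_isOpen hs hx, (hφ x hx).hasFDerivAt.fderiv]
      ext; simp
    refine ⟨φ r₀, fun r hr => ?_⟩
    have hc : φ r = φ r₀ := hconv.is_const_of_fderivWithin_eq_zero hdiffOn hfd hr hr₀
    have hune : 4 * r ^ 2 + (g r) ^ 2 ≠ 0 := ne_of_gt (hupos r hr)
    have h0 := hrpos r hr
    have hCk : φ r₀ - k * r ^ 4 = 16 * r ^ 4 / (4 * r ^ 2 + (g r) ^ 2) := by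
      rw [← hc]; simp [hφ_def]
    constructor
    · rw [hCk]
      positivity
    · rw [hCk, div_mul_cancel₀ _ hune]
  · -- reverse direction
    rintro ⟨C, hC⟩ r hr
    obtain ⟨hpos, heq⟩ := hC r hr
    -- F := (C - k x⁴)(4x² + g x²) - 16x⁴ vanishes on s
    set F : ℝ → ℝ := fun x => (C - k * x ^ 4) * (4 * x ^ 2 + (g x) ^ 2) - 16 * x ^ 4
      with hF_def
    have hFD : HasDerivAt F
        (-(k * (4 * r ^ 3)) * (4 * r ^ 2 + (g r) ^ 2) +
          (C - k * r ^ 4) * (8 * r + 2 * g r * deriv g r) - 16 * (4 * r ^ 3)) r := by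
      have h1 : HasDerivAt (fun x : ℝ => C - k * x ^ 4) (-(k * (4 * r ^ 3))) r := by
        simpa using (((hasDerivAt_pow 4 r).const_mul k).const_sub C)
      have h2 := hu r hr
      have h3 : HasDerivAt (fun x : ℝ => 16 * x ^ 4) (16 * (4 * r ^ 3)) r := by
        simpa using ((hasDerivAt_pow 4 r).const_mul (16 : ℝ))
      exact (h1.mul h2).sub h3
    -- F is eventually 0 near r
    have hFz : F =ᶠ[nhds r] fun _ => (0 : ℝ) := by
      filter_upwards [hs.mem_nhds hr] with x hx
      have := (hC x hx).2
      simp [hF_def, this]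
    have hzero : HasDerivAt (fun _ : ℝ => (0 : ℝ))
        (-(k * (4 * r ^ 3)) * (4 * r ^ 2 + (g r) ^ 2) +
          (C - k * r ^ 4) * (8 * r + 2 * g r * deriv g r) - 16 * (4 * r ^ 3)) r :=
      hFD.congr_of_eventuallyEq hFz.symm
    have hD0 : -(k * (4 * r ^ 3)) * (4 * r ^ 2 + (g r) ^ 2) +
        (C - k * r ^ 4) * (8 * r + 2 * g r * deriv g r) - 16 * (4 * r ^ 3) = 0 :=
      ((hasDerivAt_const r (0 : ℝ)).unique hzero).symm
    have h0 := hrpos r hr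
    have hr3 : (4 : ℝ) * r ^ 3 ≠ 0 := by positivity
    -- multiply goal by 4r³ and use linear combination of heq and hD0
    have key : 4 * r ^ 3 *
        (8 * (r * g r * deriv g r - 2 * (g r) ^ 2 - 4 * r ^ 2)) =
        4 * r ^ 3 * (k * (4 * r ^ 2 + (g r) ^ 2) ^ 2) := by
      linear_combination (4 * r ^ 2 + (g r) ^ 2) * hD0 -
        (8 * r + 2 * g r * deriv g r) * heq
    exact mul_left_cancel₀ hr3 key
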